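/- Every complex root α of an SSNN polynomial of degree 5 satisfies -2 ≤ Re(α) ≤ 1. -/

import Mathlib

/-- Polynomial binomial coefficient `binom(x, k) = x(x-1)⋯(x-k+1)/k!` in a complex variable. -/
noncomputable def cbinom (x : ℂ) (k : ℕ) : ℂ :=
  (∏ j ∈ Finset.range k, (x - (j : ℂ))) / (k.factorial : ℂ)

set_option maxHeartbeats 1000000 in
theorem stmt9 (δ : ℕ → ℝ)
    (hnn : ∀ i ≤ 5, 0 ≤ δ i)
    (hsym : ∀ i ≤ 5, δ i = δ (5 - i))
    (hlead : (∑ i ∈ Finset.range 6, δ i) / (Nat.factorial 5 : ℝ) ≠ 0)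
    (α : ℂ)
    (hroot : (∑ i ∈ Finset.range 6, (δ i : ℂ) * cbinom (α + 5 - (i : ℂ)) 5) = 0) :
    -2 ≤ α.re ∧ α.re ≤ 1 := by
  have h5 : δ 5 = δ 0 := (hsym 0 (by norm_num)).symm
  have h4 : δ 4 = δ 1 := (hsym 1 (by norm_num)).symm
  have h3 : δ 3 = δ 2 := (hsym 2 (by norm_num)).symm
  have ha : 0 ≤ δ 0 := hnn 0 (by norm_num)
  have hb : 0 ≤ δ 1 := hnn 1 (by norm_num)
  have hc : 0 ≤ δ 2 := hnn 2 (by norm_num)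
  set a := δ 0 with hadef
  set b := δ 1 with hbdef
  set c := δ 2 with hcdef
  -- positivity of the sum
  have hS : 0 < a + b + c := by
    have hsum : (∑ i ∈ Finset.range 6, δ i) = 2*(a+b+c) := by
      simp only [Finset.sum_range_succ, Finset.sum_range_zero, h5, h4, h3]; ring
    rw [hsum] at hlead
    have : (2:ℝ)*(a+b+c) ≠ 0 := by
      intro h; apply hlead; rw [h]; simp
    rcases lt_or_eq_of_le (by linarith : (0:ℝ) ≤ a+b+c) with h | h
    · exact h
    · exact absurd (by rw [← h]; ring) this
  -- the key factorization
  have key : (2*α+1) * ((a : ℂ)*((α^2+α)^2 + 58*(α^2+α) + 120)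
      + (b : ℂ)*((α^2+α)^2 + 18*(α^2+α))
      + (c : ℂ)*((α^2+α)^2 - 2*(α^2+α))) = 0 := by
    simp only [Finset.sum_range_succ, Finset.sum_range_zero, cbinom,
      Finset.prod_range_succ, Finset.prod_range_zero, Nat.factorial] at hroot
    push_cast at hroot
    rw [h5, h4, h3] at hroot
    linear_combination (120:ℂ) * hroot
  clear hroot hlead hnn hsym
  rcases mul_eq_zero.mp key with h | h2
  · -- 2α + 1 = 0
    have := congrArg Complex.re h
    simp only [Complex.add_re, Complex.mul_re, Complex.re_ofNat, Complex.im_ofNat,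
      Complex.one_re, Complex.zero_re] at this
    constructor <;> nlinarith [this]
  · -- the quadratic in v = α² + α vanishes
    obtain ⟨p, q⟩ := α
    show -2 ≤ p ∧ p ≤ 1
    have hre : (a+b+c)*((p^2 - q^2 + p)^2 - (2*p*q + q)^2)
        + (58*a+18*b-2*c)*(p^2 - q^2 + p) + 120*a = 0 := by
      have := congrArg Complex.re h2
      simp only [Complex.add_re, Complex.add_im, Complex.sub_re, Complex.sub_im,
        Complex.mul_re, Complex.mul_im, Complex.ofReal_re, Complex.ofReal_im,
        Complex.zero_re, Complex.re_ofNat, Complex.im_ofNat, pow_two] at this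
      linear_combination this
    have him : (2*p*q + q) * (2*((a+b+c)*(p^2 - q^2 + p)) + (58*a+18*b-2*c)) = 0 := by
      have := congrArg Complex.im h2
      simp only [Complex.add_re, Complex.add_im, Complex.sub_re, Complex.sub_im,
        Complex.mul_re, Complex.mul_im, Complex.ofReal_re, Complex.ofReal_im,
        Complex.zero_im, Complex.re_ofNat, Complex.im_ofNat, pow_two] at this
      linear_combination this
    set x : ℝ := p^2 - q^2 + p with hxdef
    set y : ℝ := 2*p*q + q with hydef
    have keyineq : y^2 + 9*x ≤ 18 := by
      rcases mul_eq_zero.mp him with hy0 | hlin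
      · -- imaginary part of v is zero: real root
        rw [hy0] at hre ⊢
        have hx2 : x ≤ 2 := by
          by_contra h
          push_neg at h
          nlinarith [mul_pos hS (mul_pos (sub_pos.mpr h) (sub_pos.mpr h)),
            mul_nonneg ha (le_of_lt (sub_pos.mpr h)),
            mul_nonneg hb (le_of_lt (sub_pos.mpr h)),
            mul_nonneg hc (le_of_lt (sub_pos.mpr h))]
        nlinarith [hx2]
      · -- complex conjugate pair
        have h4' : (a+b+c)*(x^2+y^2) = 120*a := by linear_combination x*hlin - hre
        have h5' : (2*((a+b+c)*x))^2 = (58*a+18*b-2*c)^2 := by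
          linear_combination (2*((a+b+c)*x) - (58*a+18*b-2*c)) * hlin
        have main : 4*(a+b+c)^2*(y^2+9*x-18)
            = -(4000*a^2+720*b^2+40*c^2+3120*a*b+440*a*c+360*b*c) := by
          linear_combination 4*(a+b+c)*h4' + 18*(a+b+c)*hlin - h5'
        have hneg : 4*(a+b+c)^2*(y^2+9*x-18) ≤ 0 := by
          rw [main]
          nlinarith [mul_nonneg ha hb, mul_nonneg ha hc, mul_nonneg hb hc,
            sq_nonneg a, sq_nonneg b, sq_nonneg c]
        by_contra hcon
        push_neg at hcon
        have hpos : 0 < 4*(a+b+c)^2*(y^2+9*x-18) := by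
          apply mul_pos (by positivity) (by linarith)
        linarith
    have ht : (4*q^2+9)*(p^2+p-2) ≤ 0 := by
      have hid : (4*q^2+9)*(p^2+p-2) = y^2+9*x-18 := by
        rw [hxdef, hydef]; ring
      rw [hid]; linarith
    have hpp : p^2 + p ≤ 2 := by nlinarith [sq_nonneg q]
    constructor <;> nlinarith [sq_nonneg (p+2), sq_nonneg (p-1)]
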